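/- In the setting of a weakly increasing Markov chain on positive integers with no absorbing states, the expected occupation times g_j := E[G_j] satisfy g_j = h_j/(1 − p_{j,j}), and the sequence (g_j) is the unique nonnegative solution of the system g_j = p_{0,j} + ∑_{i=1}^∞ g_i p_{i,j} for all j ≥ 1, where p_{0,j} := P(Q_0 = j). -/

import Mathlib

open MeasureTheory
open scoped ENNReal



set_option linter.unusedSectionVars false

namespace PotentialAux

variable {Ω : Type*} [MeasurableSpace Ω]

def Cyl (Q : ℕ → Ω → ℕ) (k : ℕ) (v : Fin (k + 1) → ℕ) : Set Ω :=
  {ω | ∀ l : Fin (k + 1), Q l ω = v l}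

lemma measurableSet_cyl {Q : ℕ → Ω → ℕ} (hQ : ∀ k, Measurable (Q k)) (k : ℕ)
    (v : Fin (k + 1) → ℕ) : MeasurableSet (Cyl Q k v) := by
  have h : Cyl Q k v = ⋂ l : Fin (k + 1), (Q l) ⁻¹' {v l} := by
    ext ω; simp [Cyl, Set.mem_iInter]
  rw [h]
  exact MeasurableSet.iInter fun l => (hQ l) (measurableSet_singleton _)

def Ev (Q : ℕ → Ω → ℕ) (k : ℕ) (φ : (Fin (k + 1) → ℕ) → Prop) : Set Ω :=
  {ω | φ (fun l => Q l ω)}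

lemma ev_eq_iUnion (Q : ℕ → Ω → ℕ) (k : ℕ) (φ : (Fin (k + 1) → ℕ) → Prop) :
    Ev Q k φ = ⋃ v : {v : Fin (k + 1) → ℕ // φ v}, Cyl Q k v.1 := by
  ext ω
  constructor
  · intro h
    exact Set.mem_iUnion.2 ⟨⟨fun l => Q l ω, h⟩, fun l => rfl⟩
  · intro h
    rcases Set.mem_iUnion.1 h with ⟨⟨v, hv⟩, hωv⟩
    have hv' : (fun l : Fin (k + 1) => Q l ω) = v := funext fun l => hωv l
    show φ (fun l : Fin (k + 1) => Q l ω)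
    rw [hv']; exact hv

lemma cyl_disjoint (Q : ℕ → Ω → ℕ) (k : ℕ) {v w : Fin (k + 1) → ℕ} (h : v ≠ w) :
    Disjoint (Cyl Q k v) (Cyl Q k w) := by
  rw [Set.disjoint_left]
  intro ω hv hw
  exact h (funext fun l => (hv l).symm.trans (hw l))

lemma measurableSet_ev {Q : ℕ → Ω → ℕ} (hQ : ∀ k, Measurable (Q k)) (k : ℕ)
    (φ : (Fin (k + 1) → ℕ) → Prop) : MeasurableSet (Ev Q k φ) := by
  rw [ev_eq_iUnion]
  exact MeasurableSet.iUnion fun v => measurableSet_cyl hQ k v.1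

lemma markov_ev (P : Measure Ω) {Q : ℕ → Ω → ℕ} (hQ : ∀ k, Measurable (Q k))
    {p : ℕ → ℕ → ℝ≥0∞}
    (hmarkov : ∀ (k : ℕ) (q : ℕ → ℕ) (j : ℕ),
      P ({ω | Q (k + 1) ω = j} ∩ {ω | ∀ l ≤ k, Q l ω = q l})
        = p (q k) j * P {ω | ∀ l ≤ k, Q l ω = q l})
    (k i j : ℕ) (φ : (Fin (k + 1) → ℕ) → Prop)
    (hφ : ∀ v, φ v → v (Fin.last k) = i) :
    P ({ω | Q (k + 1) ω = j} ∩ Ev Q k φ) = p i j * P (Ev Q k φ) := by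
  classical
  have key : ∀ v : Fin (k + 1) → ℕ, φ v →
      P ({ω | Q (k + 1) ω = j} ∩ Cyl Q k v) = p i j * P (Cyl Q k v) := by
    intro v hv
    set q : ℕ → ℕ := fun l => if h : l < k + 1 then v ⟨l, h⟩ else 0 with hq
    have hc : Cyl Q k v = {ω | ∀ l ≤ k, Q l ω = q l} := by
      ext ω
      constructor
      · intro h l hl
        have hl' : l < k + 1 := by omega
        have := h ⟨l, hl'⟩
        simpa [hq, hl', hl] using this
      · intro h l
        have hl : (l : ℕ) ≤ k := by omega
        have := h l hl
        simpa [hq, l.isLt, hl] using this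
    have hqk : q k = i := by
      have h1 : q k = v ⟨k, by omega⟩ := by simp [hq]
      rw [h1]
      have h2 : (⟨k, by omega⟩ : Fin (k + 1)) = Fin.last k := by ext; simp
      rw [h2]
      exact hφ v hv
    rw [hc, hmarkov k q j, hqk]
  have hev := ev_eq_iUnion Q k φ
  have hdisj : Pairwise (Function.onFun Disjoint
      (fun v : {v : Fin (k + 1) → ℕ // φ v} => Cyl Q k v.1)) := by
    intro v w hvw
    exact cyl_disjoint Q k fun h => hvw (Subtype.ext h)
  have hdisj2 : Pairwise (Function.onFun Disjoint
      (fun v : {v : Fin (k + 1) → ℕ // φ v} =>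
        {ω | Q (k + 1) ω = j} ∩ Cyl Q k v.1)) := by
    intro v w hvw
    exact Disjoint.mono Set.inter_subset_right Set.inter_subset_right (hdisj hvw)
  have hm1 : P (Ev Q k φ) = ∑' v : {v : Fin (k + 1) → ℕ // φ v}, P (Cyl Q k v.1) := by
    rw [hev, measure_iUnion hdisj fun v => measurableSet_cyl hQ k v.1]
  have hm2 : P ({ω | Q (k + 1) ω = j} ∩ Ev Q k φ)
      = ∑' v : {v : Fin (k + 1) → ℕ // φ v},
          P ({ω | Q (k + 1) ω = j} ∩ Cyl Q k v.1) := by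
    rw [hev, Set.inter_iUnion,
      measure_iUnion hdisj2 fun v =>
        ((hQ (k + 1)) (measurableSet_singleton j)).inter (measurableSet_cyl hQ k v.1)]
  rw [hm1, hm2, ← ENNReal.tsum_mul_left]
  exact tsum_congr fun v => key v.1 v.2

/-- uniqueness of solutions of `x = C + x * q` in `ℝ≥0∞` for finite `x`, `q < 1`. -/
lemma fixed_point_eq {x C q : ℝ≥0∞} (hx : x ≠ ⊤) (hq : q < 1) (hxe : x = C + x * q) :
    x = C * (1 - q)⁻¹ := by
  have hq1 : (1 : ℝ≥0∞) - q ≠ 0 := by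
    rw [Ne, tsub_eq_zero_iff_le]
    exact not_le.2 hq
  have hqt : (1 : ℝ≥0∞) - q ≠ ⊤ := by
    exact (lt_of_le_of_lt tsub_le_self ENNReal.one_lt_top).ne
  have hxq : x * q ≠ ⊤ := ENNReal.mul_ne_top hx (hq.trans ENNReal.one_lt_top).ne
  have h1 : x - x * q = C := ENNReal.sub_eq_of_eq_add hxq hxe
  have h2 : x * (1 - q) = C := by
    rw [ENNReal.mul_sub fun _ _ => hx, mul_one]
    exact h1
  calc x = x * ((1 - q) * (1 - q)⁻¹) := by
        rw [ENNReal.mul_inv_cancel hq1 hqt, mul_one]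
    _ = (x * (1 - q)) * (1 - q)⁻¹ := by rw [mul_assoc]
    _ = C * (1 - q)⁻¹ := by rw [h2]

end PotentialAux

open PotentialAux


/-- For a weakly increasing Markov chain `Q` on the positive integers with no absorbing
states, the expected occupation times `g_j = E[G_j]` satisfy `g_j = h_j/(1 − p_{j,j})`,
and `(g_j)` is the unique (finite, nonnegative) solution of the potential equations
`g_j = p_{0,j} + ∑_{i≥1} g_i p_{i,j}`, where `p_{0,j} = P(Q_0 = j)`. -/
theorem potential_equations_unique_solution
    {Ω : Type*} [MeasurableSpace Ω] (P : Measure Ω) [IsProbabilityMeasure P]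
    (Q : ℕ → Ω → ℕ) (hQmeas : ∀ k, Measurable (Q k))
    (hpos : ∀ k ω, 1 ≤ Q k ω)
    (p : ℕ → ℕ → ℝ≥0∞)
    (hrow : ∀ i, 1 ≤ i → ∑' j, p i j = 1)
    (hinc : ∀ i j, j < i → p i j = 0)
    (hnoabs : ∀ j, 1 ≤ j → p j j < 1)
    (hmarkov : ∀ (k : ℕ) (q : ℕ → ℕ) (j : ℕ),
      P ({ω | Q (k + 1) ω = j} ∩ {ω | ∀ l ≤ k, Q l ω = q l})
        = p (q k) j * P {ω | ∀ l ≤ k, Q l ω = q l})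
    (g : ℕ → ℝ≥0∞)
    (hg : ∀ j, g j = ∫⁻ ω, ∑' n, (if Q n ω = j then 1 else 0) ∂P) :
    (∀ j, 1 ≤ j → g j = P {ω | ∃ n, Q n ω = j} / (1 - p j j))
    ∧ (∀ j, 1 ≤ j → g j = P {ω | Q 0 ω = j} + ∑' i, g (i + 1) * p (i + 1) j)
    ∧ (∀ g' : ℕ → ℝ≥0∞, (∀ j, g' j ≠ ⊤) →
        (∀ j, 1 ≤ j → g' j = P {ω | Q 0 ω = j} + ∑' i, g' (i + 1) * p (i + 1) j) →
        ∀ j, 1 ≤ j → g' j = g j) := by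
  classical
  have hQset : ∀ k j, MeasurableSet {ω | Q k ω = j} := fun k j =>
    hQmeas k (measurableSet_singleton j)
  set f : ℕ → ℕ → ℝ≥0∞ := fun k j => P {ω | Q k ω = j} with hfdef
  -- g as a sum of occupation probabilities
  have hgsum : ∀ j, g j = ∑' k, f k j := by
    intro j
    rw [hg j]
    have hmeas : ∀ n : ℕ, AEMeasurable (fun ω => if Q n ω = j then (1 : ℝ≥0∞) else 0) P := by
      intro n
      have : (fun ω => if Q n ω = j then (1 : ℝ≥0∞) else 0)
          = Set.indicator {ω | Q n ω = j} (fun _ => 1) := by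
        funext ω; simp [Set.indicator_apply, Set.mem_setOf_eq]
      rw [this]
      exact (measurable_const.indicator (hQset n j)).aemeasurable
    rw [lintegral_tsum hmeas]
    refine tsum_congr fun n => ?_
    have : (fun ω => if Q n ω = j then (1 : ℝ≥0∞) else 0)
        = Set.indicator {ω | Q n ω = j} (fun _ => 1) := by
      funext ω; simp [Set.indicator_apply, Set.mem_setOf_eq]
    rw [this]
    exact lintegral_indicator_one (hQset n j)
  -- identification of level sets as Ev events
  have hEv : ∀ k i, {ω | Q k ω = i} = Ev Q k (fun v => v (Fin.last k) = i) := by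
    intro k i
    ext ω
    simp [Ev, Fin.val_last]
  -- one-step recursion
  have hstep : ∀ k j, f (k + 1) j = ∑' i, p i j * f k i := by
    intro k j
    have hdecomp : {ω | Q (k + 1) ω = j}
        = ⋃ i, ({ω | Q (k + 1) ω = j} ∩ {ω | Q k ω = i}) := by
      ext ω
      simp only [Set.mem_iUnion, Set.mem_inter_iff, Set.mem_setOf_eq]
      exact ⟨fun h => ⟨Q k ω, h, rfl⟩, fun ⟨i, h, _⟩ => h⟩
    have hdisj : Pairwise (Function.onFun Disjoint
        (fun i => {ω | Q (k + 1) ω = j} ∩ {ω | Q k ω = i})) := by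
      intro i i' hii
      rw [Function.onFun, Set.disjoint_left]
      rintro ω ⟨-, h1⟩ ⟨-, h2⟩
      exact hii (h1.symm.trans h2)
    calc f (k + 1) j = ∑' i, P ({ω | Q (k + 1) ω = j} ∩ {ω | Q k ω = i}) := by
          show P {ω | Q (k + 1) ω = j} = _
          conv_lhs => rw [hdecomp]
          exact measure_iUnion hdisj fun i => (hQset (k + 1) j).inter (hQset k i)
      _ = ∑' i, p i j * f k i := by
          refine tsum_congr fun i => ?_
          have h := markov_ev P hQmeas hmarkov k i j _ fun v hv => hv
          rw [← hEv k i] at h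
          exact h
  -- the potential equation
  have hf0 : ∀ k, f k 0 = 0 := by
    intro k
    have : {ω | Q k ω = 0} = ∅ := by
      ext ω
      simp only [Set.mem_setOf_eq, Set.mem_empty_iff_false, iff_false]
      have := hpos k ω; omega
    simp only [hfdef, this, measure_empty]
  have hg0 : g 0 = 0 := by
    rw [hgsum 0]
    simp [hf0]
  have hpot : ∀ j, g j = P {ω | Q 0 ω = j} + ∑' i, g (i + 1) * p (i + 1) j := by
    intro j
    have h1 : g j = f 0 j + ∑' i, g i * p i j := by
      rw [hgsum j, tsum_eq_zero_add' ENNReal.summable]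
      congr 1
      calc ∑' k, f (k + 1) j = ∑' k, ∑' i, p i j * f k i := tsum_congr fun k => hstep k j
        _ = ∑' i, ∑' k, p i j * f k i := ENNReal.tsum_comm
        _ = ∑' i, p i j * ∑' k, f k i := tsum_congr fun i => ENNReal.tsum_mul_left
        _ = ∑' i, g i * p i j := tsum_congr fun i => by rw [← hgsum i, mul_comm]
    rw [h1]
    congr 1
    rw [tsum_eq_zero_add' ENNReal.summable, hg0, zero_mul, zero_add]
  -- the null set of decreases
  have hnull : P {ω | ∃ k, Q (k + 1) ω < Q k ω} = 0 := by
    have hsub : {ω | ∃ k, Q (k + 1) ω < Q k ω} ⊆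
        ⋃ (k : ℕ) (i : ℕ) (j : ℕ) (_ : j < i),
          ({ω | Q (k + 1) ω = j} ∩ {ω | Q k ω = i}) := by
      rintro ω ⟨k, hk⟩
      refine Set.mem_iUnion.2 ⟨k, Set.mem_iUnion.2 ⟨Q k ω, Set.mem_iUnion.2
        ⟨Q (k + 1) ω, Set.mem_iUnion.2 ⟨hk, rfl, rfl⟩⟩⟩⟩
    refine measure_mono_null hsub ?_
    refine measure_iUnion_null fun k => measure_iUnion_null fun i =>
      measure_iUnion_null fun j => ?_
    by_cases hji : j < i
    · rw [Set.iUnion_eq_if, if_pos hji, hEv k i,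
        markov_ev P hQmeas hmarkov k i j _ fun v hv => hv, hinc i j hji, zero_mul]
    · rw [Set.iUnion_eq_if, if_neg hji, measure_empty]
  have hmono : ∀ ω, ω ∉ {ω | ∃ k, Q (k + 1) ω < Q k ω} → Monotone fun k => Q k ω := by
    intro ω hω
    refine monotone_nat_of_le_succ fun k => ?_
    by_contra h
    exact hω ⟨k, by omega⟩
  -- part 1
  have hpart1 : ∀ j, 1 ≤ j → g j = P {ω | ∃ n, Q n ω = j} / (1 - p j j) := by
    intro j hj
    set B : ℕ → ℕ → Set Ω := fun s t =>
      {ω | (∀ l, s ≤ l → l ≤ t → Q l ω = j) ∧ (∀ l, l < s → Q l ω ≠ j)} with hBdef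
    have hBev : ∀ s t, s ≤ t → B s t = Ev Q t (fun v =>
        (∀ l : Fin (t + 1), s ≤ (l : ℕ) → v l = j)
          ∧ (∀ l : Fin (t + 1), (l : ℕ) < s → v l ≠ j)) := by
      intro s t hst
      ext ω
      simp only [hBdef, Ev, Set.mem_setOf_eq]
      constructor
      · rintro ⟨h1, h2⟩
        exact ⟨fun l hl => h1 l hl (by omega), fun l hl => h2 l hl⟩
      · rintro ⟨h1, h2⟩
        refine ⟨fun l hl1 hl2 => ?_, fun l hl => ?_⟩
        · have := h1 ⟨l, by omega⟩ hl1
          simpa using this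
        · have := h2 ⟨l, by omega⟩ hl
          simpa using this
    have hBmeas : ∀ s t, s ≤ t → MeasurableSet (B s t) := by
      intro s t hst
      rw [hBev s t hst]
      exact measurableSet_ev hQmeas t _
    have hBrec : ∀ s t, s ≤ t → P (B s (t + 1)) = p j j * P (B s t) := by
      intro s t hst
      have h1 : B s (t + 1) = {ω | Q (t + 1) ω = j} ∩ B s t := by
        ext ω
        simp only [hBdef, Set.mem_setOf_eq, Set.mem_inter_iff]
        constructor
        · rintro ⟨h1, h2⟩
          exact ⟨h1 (t + 1) (by omega) le_rfl, fun l hl1 hl2 => h1 l hl1 (by omega), h2⟩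
        · rintro ⟨hq, h1, h2⟩
          refine ⟨fun l hl1 hl2 => ?_, h2⟩
          rcases Nat.lt_or_ge l (t + 1) with hlt | hge
          · exact h1 l hl1 (by omega)
          · have : l = t + 1 := by omega
            rw [this]; exact hq
      rw [h1, hBev s t hst, markov_ev P hQmeas hmarkov t j j _ ?_]
      rintro v ⟨h1, -⟩
      exact h1 (Fin.last t) (by simpa [Fin.val_last] using hst)
    have hBval : ∀ s m, P (B s (s + m)) = P (B s s) * (p j j) ^ m := by
      intro s m
      induction m with
      | zero => simp
      | succ m ih =>
        have : s + (m + 1) = (s + m) + 1 := by omega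
        rw [this, hBrec s (s + m) (by omega), ih, pow_succ]
        ring
    -- occupation prob as sum over first-hit times
    have hsub1 : ∀ s t, s ≤ t → B s t ⊆ {ω | Q t ω = j} := by
      intro s t hst ω hω
      exact hω.1 t hst le_rfl
    have hsub2 : ∀ t, {ω | Q t ω = j} ⊆
        (⋃ s ∈ Finset.range (t + 1), B s t) ∪ {ω | ∃ k, Q (k + 1) ω < Q k ω} := by
      intro t ω hω
      by_cases hN : ω ∈ {ω | ∃ k, Q (k + 1) ω < Q k ω}
      · exact Or.inr hN
      · left
        have hm := hmono ω hN
        have hex : ∃ l, Q l ω = j := ⟨t, hω⟩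
        have hs : Q (Nat.find hex) ω = j := Nat.find_spec hex
        have hslt : Nat.find hex ≤ t := Nat.find_min' hex hω
        refine Set.mem_biUnion (Finset.mem_range.2 (Nat.lt_succ_of_le hslt)) ?_
        refine ⟨fun l hl1 hl2 => ?_, fun l hl => Nat.find_min hex hl⟩
        have h1 : Q (Nat.find hex) ω ≤ Q l ω := hm hl1
        have h2 : Q l ω ≤ Q t ω := hm hl2
        have hω' : Q t ω = j := hω
        omega
    have hdisjB : ∀ t, (↑(Finset.range (t + 1)) : Set ℕ).PairwiseDisjoint
        (fun s => B s t) := by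
      intro t s hs s' hs' hne
      simp only [Finset.coe_range, Set.mem_Iio] at hs hs'
      rw [Function.onFun, Set.disjoint_left]
      intro ω hω hω'
      rcases Nat.lt_or_ge s s' with h | h
      · exact hω'.2 s h (hω.1 s le_rfl (by omega))
      · have h' : s' < s := by omega
        exact hω.2 s' h' (hω'.1 s' le_rfl (by omega))
    have hft : ∀ t, f t j = ∑ s ∈ Finset.range (t + 1), P (B s t) := by
      intro t
      have hU : P (⋃ s ∈ Finset.range (t + 1), B s t)
          = ∑ s ∈ Finset.range (t + 1), P (B s t) :=
        measure_biUnion_finset (hdisjB t)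
          (fun s hs => hBmeas s t (by simpa using Nat.lt_succ_iff.1 (Finset.mem_range.1 hs)))
      refine le_antisymm ?_ ?_
      · calc f t j ≤ P ((⋃ s ∈ Finset.range (t + 1), B s t)
              ∪ {ω | ∃ k, Q (k + 1) ω < Q k ω}) := measure_mono (hsub2 t)
          _ ≤ P (⋃ s ∈ Finset.range (t + 1), B s t)
              + P {ω | ∃ k, Q (k + 1) ω < Q k ω} := measure_union_le _ _
          _ = ∑ s ∈ Finset.range (t + 1), P (B s t) := by rw [hnull, add_zero, hU]
      · rw [← hU]
        exact measure_mono (Set.iUnion₂_subset fun s hs =>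
          hsub1 s t (Nat.lt_succ_iff.1 (Finset.mem_range.1 hs)))
    -- first hit decomposition of the hitting probability
    have hhit : {ω | ∃ n, Q n ω = j} = ⋃ s, B s s := by
      ext ω
      simp only [Set.mem_setOf_eq, Set.mem_iUnion]
      constructor
      · intro hex
        refine ⟨Nat.find hex, fun l h1 h2 => ?_, fun l hl => Nat.find_min hex hl⟩
        have : l = Nat.find hex := by omega
        rw [this]
        exact Nat.find_spec hex
      · rintro ⟨s, hs⟩
        exact ⟨s, hs.1 s le_rfl le_rfl⟩
    have hhits : P {ω | ∃ n, Q n ω = j} = ∑' s, P (B s s) := by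
      rw [hhit]
      refine measure_iUnion ?_ fun s => hBmeas s s le_rfl
      intro s s' hss
      rw [Function.onFun, Set.disjoint_left]
      intro ω hω hω'
      rcases Nat.lt_or_ge s s' with h | h
      · exact hω'.2 s h (hω.1 s le_rfl le_rfl)
      · have h' : s' < s := by omega
        exact hω.2 s' h' (hω'.1 s' le_rfl le_rfl)
    -- the final computation
    have hmain : g j = ∑' t, ∑' s, (if s ≤ t then P (B s s) * (p j j) ^ (t - s) else 0) := by
      rw [hgsum j]
      refine tsum_congr fun t => ?_
      rw [hft t]
      rw [tsum_eq_sum (s := Finset.range (t + 1))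
        (fun s hs => if_neg (by simp only [Finset.mem_range] at hs; omega))]
      refine Finset.sum_congr rfl fun s hs => ?_
      have hst : s ≤ t := Nat.lt_succ_iff.1 (Finset.mem_range.1 hs)
      rw [if_pos hst]
      have ht : s + (t - s) = t := by omega
      calc P (B s t) = P (B s (s + (t - s))) := by rw [ht]
        _ = P (B s s) * p j j ^ (t - s) := hBval s (t - s)
    rw [hmain, ENNReal.tsum_comm]
    have hinner : ∀ s, (∑' t, if s ≤ t then P (B s s) * (p j j) ^ (t - s) else 0)
        = P (B s s) * (1 - p j j)⁻¹ := by
      intro s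
      have hrange : ∀ x ∉ Set.range (fun m : ℕ => s + m),
          (if s ≤ x then P (B s s) * (p j j) ^ (x - s) else 0) = 0 := by
        intro x hx
        rw [if_neg]
        intro hsx
        refine hx ⟨x - s, ?_⟩
        show s + (x - s) = x
        omega
      have hinj : Function.Injective (fun m : ℕ => s + m) := add_right_injective s
      rw [← Function.Injective.tsum_eq hinj (Function.support_subset_iff'.2 hrange)]
      have : ∀ m : ℕ, (if s ≤ s + m then P (B s s) * (p j j) ^ (s + m - s) else 0)
          = P (B s s) * (p j j) ^ m := by
        intro m
        rw [if_pos (by omega)]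
        congr 2
        omega
      rw [tsum_congr this, ENNReal.tsum_mul_left, ENNReal.tsum_geometric]
    calc (∑' s, ∑' t, if s ≤ t then P (B s s) * (p j j) ^ (t - s) else 0)
        = ∑' s, P (B s s) * (1 - p j j)⁻¹ := tsum_congr hinner
      _ = (∑' s, P (B s s)) * (1 - p j j)⁻¹ := ENNReal.tsum_mul_right
      _ = P {ω | ∃ n, Q n ω = j} / (1 - p j j) := by
          rw [← hhits, div_eq_mul_inv]
  -- finiteness of g
  have hgfin : ∀ j, 1 ≤ j → g j ≠ ⊤ := by
    intro j hj
    rw [hpart1 j hj]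
    have h1 : (1 : ℝ≥0∞) - p j j ≠ 0 := by
      rw [Ne, tsub_eq_zero_iff_le]
      exact not_le.2 (hnoabs j hj)
    exact (ENNReal.div_lt_top (lt_of_le_of_lt prob_le_one ENNReal.one_lt_top).ne h1).ne
  refine ⟨hpart1, fun j _ => hpot j, ?_⟩
  -- uniqueness
  intro g' hg't hg'e j hj
  induction j using Nat.strong_induction_on with
  | _ j ih =>
  obtain ⟨n, rfl⟩ : ∃ n, j = n + 1 := ⟨j - 1, by omega⟩
  have hsum : ∀ x : ℕ → ℝ≥0∞, (∑' i, x (i + 1) * p (i + 1) (n + 1))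
      = (∑ i ∈ Finset.range n, x (i + 1) * p (i + 1) (n + 1))
        + x (n + 1) * p (n + 1) (n + 1) := by
    intro x
    rw [tsum_eq_sum (s := Finset.range (n + 1)) (fun i hi => by
      rw [hinc (i + 1) (n + 1) (by simp only [Finset.mem_range] at hi; omega), mul_zero]),
      Finset.sum_range_succ]
  set C : ℝ≥0∞ := P {ω | Q 0 ω = n + 1}
      + ∑ i ∈ Finset.range n, g (i + 1) * p (i + 1) (n + 1) with hC
  have hgC : g (n + 1) = C + g (n + 1) * p (n + 1) (n + 1) := by
    conv_lhs => rw [hpot (n + 1)]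
    rw [hsum g, hC]
    exact (add_assoc _ _ _).symm
  have hg'C : g' (n + 1) = C + g' (n + 1) * p (n + 1) (n + 1) := by
    have hSS : ∑ i ∈ Finset.range n, g' (i + 1) * p (i + 1) (n + 1)
        = ∑ i ∈ Finset.range n, g (i + 1) * p (i + 1) (n + 1) := by
      refine Finset.sum_congr rfl fun i hi => ?_
      have hii : i + 1 < n + 1 := by
        simp only [Finset.mem_range] at hi; omega
      rw [ih (i + 1) hii (by omega)]
    conv_lhs => rw [hg'e (n + 1) (by omega)]
    rw [hsum g', hSS, hC]
    exact (add_assoc _ _ _).symm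
  rw [fixed_point_eq (hg't (n + 1)) (hnoabs (n + 1) (by omega)) hg'C,
    fixed_point_eq (hgfin (n + 1) (by omega)) (hnoabs (n + 1) (by omega)) hgC]
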